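/- There exists a closed (hence compact) subset X of the Cantor cube {0,1}^ι, where ι is an index type of cardinality ℵ₁, such that every point x of X has countable support (the set {i : x i = 1} is countable), and X admits a family of ℵ₁ many closed Gδ subsets whose union is X such that no countable subfamily has union X. -/

import Mathlib

open Set Ordinal

/-- An index type of cardinality `ℵ₁`: the countable ordinals. -/
abbrev Omega1Index : Type 1 := {o : Ordinal // o < Ordinal.omega 1}

noncomputable section CorsonAux

/-- A countable type in `Type 1`, a copy of `ℚ`. -/
abbrev QQ : Type 1 := ULift.{1} ℚ

lemma mk_omega1Index :
    Cardinal.mk Omega1Index = Cardinal.lift.{1} (Cardinal.aleph (1 : Ordinal.{0})) := by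
  have h := Ordinal.mk_Iio_ordinal (Ordinal.omega (1 : Ordinal.{0}))
  rw [Ordinal.card_omega] at h
  exact h

lemma mk_prod_QQ : Cardinal.mk (Omega1Index × QQ) = Cardinal.mk Omega1Index := by
  have hq : Cardinal.mk QQ = Cardinal.aleph0 := by
    simp [Cardinal.mk_uLift, Cardinal.mk_denumerable]
  have hinf : Cardinal.aleph0 ≤ Cardinal.mk Omega1Index := by
    rw [mk_omega1Index]
    have : Cardinal.lift.{1} Cardinal.aleph0 ≤ Cardinal.lift.{1} (Cardinal.aleph (1 : Ordinal.{0})) :=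
      Cardinal.lift_le.mpr Cardinal.aleph0_lt_aleph_one.le
    simpa using this
  calc Cardinal.mk (Omega1Index × QQ)
      = Cardinal.mk Omega1Index * Cardinal.mk QQ := by
        simp [Cardinal.mk_prod]
    _ = Cardinal.mk Omega1Index := by
        rw [hq]
        exact Cardinal.mul_eq_left hinf hinf Cardinal.aleph0_ne_zero

/-- A bijection between `Omega1Index × ℚ` and `Omega1Index`. -/
def eIdx : Omega1Index × QQ ≃ Omega1Index := (Cardinal.eq.mp mk_prod_QQ).some

/-- Compatibility relation: two indices are compatible if they are equal or their
`(ordinal, rational)` decompositions are strictly order-reversing. -/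
def Compat (i j : Omega1Index) : Prop :=
  i = j ∨
  ((eIdx.symm i).1 < (eIdx.symm j).1 ∧ ((eIdx.symm j).2).down < ((eIdx.symm i).2).down) ∨
  ((eIdx.symm j).1 < (eIdx.symm i).1 ∧ ((eIdx.symm i).2).down < ((eIdx.symm j).2).down)

end CorsonAux

/-- There is a closed (hence compact) subset `X` of the Cantor cube `{0,1}^{ω₁}` all of
whose points have countable support (so `X` is Corson compact), together with a family of
`ℵ₁` many closed `Gδ` subsets of `X` whose union is `X` such that no countable subfamily
has union `X`. -/
theorem exists_Corson_pseudoAronszajn :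
    ∃ X : Set (Omega1Index → Bool),
      IsClosed X ∧
      (∀ x ∈ X, {i : Omega1Index | x i = true}.Countable) ∧
      ∃ Z : Omega1Index → Set X,
        (∀ α, IsClosed (Z α)) ∧ (∀ α, IsGδ (Z α)) ∧ (⋃ α, Z α) = Set.univ ∧
        ¬ ∃ C : Set Omega1Index, C.Countable ∧ (⋃ α ∈ C, Z α) = Set.univ := by
  classical
  set e : Omega1Index × QQ ≃ Omega1Index := eIdx with he
  -- the space
  set X : Set (Omega1Index → Bool) :=
    {x | ∀ i j, x i = true → x j = true → Compat i j} with hX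
  -- coordinate sets are clopen
  have hopen : ∀ (i : Omega1Index) (b : Bool),
      IsOpen {x : Omega1Index → Bool | x i = b} := by
    intro i b
    have : {x : Omega1Index → Bool | x i = b} = (fun x : Omega1Index → Bool => x i) ⁻¹' {b} := by
      ext x; simp
    rw [this]
    exact (continuous_apply i).isOpen_preimage _ (isOpen_discrete _)
  -- countable supports (proved once, used twice)
  have hsupp : ∀ x ∈ X, {i : Omega1Index | x i = true}.Countable := by
    intro x hx
    have hinj : Function.Injective
        (fun i : {i : Omega1Index | x i = true} => ((e.symm (i : Omega1Index)).2).down) := by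
      rintro ⟨i, hi⟩ ⟨j, hj⟩ hpq
      simp only at hpq
      have hcomp : Compat i j := hx i j hi hj
      rcases hcomp with h | h | h
      · exact Subtype.ext h
      · rw [he] at hpq; rw [hpq] at h; exact absurd h.2 (lt_irrefl _)
      · rw [he] at hpq; rw [hpq] at h; exact absurd h.2 (lt_irrefl _)
    have : Countable {i : Omega1Index | x i = true} := hinj.countable
    exact Set.countable_coe_iff.mp this
  -- the whole space is uncountable
  have huncount : ¬ (Set.univ : Set Omega1Index).Countable := by
    intro h
    have hc : Countable Omega1Index := Set.countable_univ_iff.mp h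
    have h2 : Cardinal.mk Omega1Index ≤ Cardinal.aleph0 := Cardinal.mk_le_aleph0
    rw [mk_omega1Index] at h2
    have h3 : Cardinal.lift.{1} (Cardinal.aleph (1 : Ordinal.{0})) ≤
        Cardinal.lift.{1} (Cardinal.aleph0 : Cardinal.{0}) := by
      simpa using h2
    have h4 : Cardinal.aleph (1 : Ordinal.{0}) ≤ (Cardinal.aleph0 : Cardinal.{0}) :=
      Cardinal.lift_le.mp h3
    exact absurd h4 (not_le.mpr Cardinal.aleph0_lt_aleph_one)
  refine ⟨X, ?_, hsupp, ?_⟩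
  · -- X is closed
    have hXeq : X = ⋂ (i : Omega1Index) (j : Omega1Index) (_ : ¬ Compat i j),
        {x : Omega1Index → Bool | ¬(x i = true ∧ x j = true)} := by
      ext x
      simp only [hX, mem_setOf_eq, mem_iInter]
      constructor
      · rintro h i j hc ⟨h1, h2⟩
        exact hc (h i j h1 h2)
      · intro h i j h1 h2
        by_contra hc
        exact h i j hc ⟨h1, h2⟩
    rw [hXeq]
    refine isClosed_iInter fun i => isClosed_iInter fun j => isClosed_iInter fun _ => ?_
    have : {x : Omega1Index → Bool | ¬(x i = true ∧ x j = true)} =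
        ({x : Omega1Index → Bool | x i = true} ∩ {x : Omega1Index → Bool | x j = true})ᶜ := by
      ext x
      simp only [mem_setOf_eq, mem_compl_iff, mem_inter_iff]
    rw [this]
    exact ((hopen i true).inter (hopen j true)).isClosed_compl
  · -- the family Z
    set Z : Omega1Index → Set X :=
      fun α => {x : X | ∀ q : QQ, (x : Omega1Index → Bool) (e (α, q)) = false} with hZ
    have hZeq : ∀ α, Z α = ⋂ q : QQ,
        (fun x : X => (x : Omega1Index → Bool) (e (α, q))) ⁻¹' {false} := by
      intro α
      ext x
      simp [hZ, mem_iInter]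
    have hcont : ∀ (α : Omega1Index) (q : QQ),
        Continuous (fun x : X => (x : Omega1Index → Bool) (e (α, q))) :=
      fun α q => (continuous_apply (e (α, q))).comp continuous_subtype_val
    refine ⟨Z, ?_, ?_, ?_, ?_⟩
    · intro α
      rw [hZeq]
      exact isClosed_iInter fun q => (isClosed_discrete _).preimage (hcont α q)
    · intro α
      rw [hZeq]
      exact IsGδ.iInter_of_isOpen fun q => (isOpen_discrete _).preimage (hcont α q)
    · -- union is everything
      ext x
      simp only [mem_iUnion, mem_univ, iff_true]
      obtain ⟨x, hx⟩ := x
      have hS : {i : Omega1Index | x i = true}.Countable := hsupp x hx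
      have hA : ((fun i => (e.symm i).1) '' {i : Omega1Index | x i = true}).Countable :=
        hS.image _
      have hex : ∃ α : Omega1Index, α ∉ (fun i => (e.symm i).1) '' {i | x i = true} := by
        by_contra hcon
        push_neg at hcon
        refine huncount (hA.mono ?_)
        intro α _
        exact hcon α
      obtain ⟨α, hα⟩ := hex
      refine ⟨α, ?_⟩
      intro q
      by_contra hq
      have hq' : x (e (α, q)) = true := by
        cases h : x (e (α, q)) with
        | false => exact absurd h hq
        | true => rfl
      refine hα ⟨e (α, q), hq', ?_⟩
      simp
    · -- no countable subcover
      rintro ⟨C, hC, hcov⟩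
      haveI : Countable ↥C := hC.to_subtype
      obtain ⟨f⟩ := Order.embedding_from_countable_to_dense (α := ↥C) (β := ℚᵒᵈ)
      set g : ↥C → ℚ := fun c => OrderDual.ofDual (f c) with hg
      have hglt : ∀ {c c' : ↥C}, c < c' → g c' < g c := by
        intro c c' h
        exact f.strictMono h
      set x : Omega1Index → Bool :=
        fun i => if ∃ c : ↥C, i = e ((c : Omega1Index), ULift.up (g c)) then true else false
        with hxdef
      have hmem : ∀ {i : Omega1Index}, x i = true →
          ∃ c : ↥C, i = e ((c : Omega1Index), ULift.up (g c)) := by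
        intro i hi
        by_contra hP
        rw [hxdef] at hi
        simp only [if_neg hP] at hi
        exact Bool.false_ne_true hi
      have hxX : x ∈ X := by
        intro i j hi hj
        obtain ⟨c, rfl⟩ := hmem hi
        obtain ⟨c', rfl⟩ := hmem hj
        rcases lt_trichotomy c c' with h | h | h
        · right; left
          constructor
          · simp only [he, Equiv.symm_apply_apply]
            exact Subtype.coe_lt_coe.mpr h
          · simp only [he, Equiv.symm_apply_apply]
            exact hglt h
        · left; rw [h]
        · right; right
          constructor
          · simp only [he, Equiv.symm_apply_apply]
            exact Subtype.coe_lt_coe.mpr h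
          · simp only [he, Equiv.symm_apply_apply]
            exact hglt h
      have hxuniv : (⟨x, hxX⟩ : X) ∈ ⋃ α ∈ C, Z α := by
        rw [hcov]; trivial
      simp only [mem_iUnion] at hxuniv
      obtain ⟨α, hαC, hαZ⟩ := hxuniv
      have hfalse : x (e (α, ULift.up (g ⟨α, hαC⟩))) = false :=
        hαZ (ULift.up (g ⟨α, hαC⟩))
      have hx1 : x (e (α, ULift.up (g ⟨α, hαC⟩))) = true := by
        rw [hxdef]
        exact if_pos ⟨⟨α, hαC⟩, rfl⟩
      rw [hx1] at hfalse
      exact absurd hfalse (by simp)
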